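/- arXiv:0707.3789 — 2 statements merged into one kernel-verified Lean document; each statement's English description precedes it below -/
import Mathlib

section
/- Monotonicity of guard values: if η is an initial segment of ξ and the guard φ has a defined value ⟦φ⟧_X^η, then ⟦φ⟧_X^ξ is defined and equal to ⟦φ⟧_X^η. -/
/-- ASM-terms over an internal vocabulary F and an external vocabulary E
(no variables); arities are not tracked, arguments are lists. -/
inductive Term (F E : Type*) : Type _
  | func : F → List (Term F E) → Term F E
  | ext  : E → List (Term F E) → Term F E

/-- Value relation ⟦t⟧_X^ξ = a, relative to a state `X` (interpretation of the
internal symbols), a template assignment `tmpl`, and the answer function `ans`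
of a history.  For an internal symbol the value is `X f` applied to the
argument values; for an external symbol it is the reply `ans (tmpl e as)`
to the query `tmpl e as` (the q-value), when that query is answered. -/
inductive Val {A Q F E : Type*} (X : F → List A → A) (tmpl : E → List A → Q)
    (ans : Q → Option A) : Term F E → A → Prop
  | func {f : F} {ts : List (Term F E)} {as : List A} :
      ts.length = as.length →
      (∀ p ∈ ts.zip as, Val X tmpl ans p.1 p.2) →
      Val X tmpl ans (.func f ts) (X f as)
  | ext {e : E} {ts : List (Term F E)} {as : List A} {a : A} :
      ts.length = as.length →
      (∀ p ∈ ts.zip as, Val X tmpl ans p.1 p.2) →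
      ans (tmpl e as) = some a →
      Val X tmpl ans (.ext e ts) a

/-- q-value of a query-term: q-⟦f(t₁,…,tₙ)⟧ = f̂[a₁,…,aₙ]. -/
inductive QVal {A Q F E : Type*} (X : F → List A → A) (tmpl : E → List A → Q)
    (ans : Q → Option A) : Term F E → Q → Prop
  | mk {e : E} {ts : List (Term F E)} {as : List A} :
      ts.length = as.length →
      (∀ p ∈ ts.zip as, Val X tmpl ans p.1 p.2) →
      QVal X tmpl ans (.ext e ts) (tmpl e as)

/-- Causality relation ξ ⊢_X^t q : the queries caused by a term.  When some
argument lacks a value, the queries are those caused by the arguments; when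
all arguments of an external call have values and the resulting query is
unanswered, that query is caused. -/
inductive Causes {A Q F E : Type*} (X : F → List A → A) (tmpl : E → List A → Q)
    (ans : Q → Option A) : Term F E → Q → Prop
  | funcArg {f ts t' q} : t' ∈ ts → Causes X tmpl ans t' q →
      Causes X tmpl ans (.func f ts) q
  | extArg {e ts t' q} : t' ∈ ts → Causes X tmpl ans t' q →
      Causes X tmpl ans (.ext e ts) q
  | extQ {e : E} {ts : List (Term F E)} {as : List A} :
      ts.length = as.length →
      (∀ p ∈ ts.zip as, Val X tmpl ans p.1 p.2) →
      ans (tmpl e as) = none →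
      Causes X tmpl ans (.ext e ts) (tmpl e as)

/-- A history: a partial answer function together with a binary relation
(intended: a linear pre-order of its domain). -/
structure Hist (A Q : Type*) where
  ans : Q → Option A
  le : Q → Q → Prop

/-- ξ is a genuine history: `le` is a linear pre-order whose field is the
domain of the answer function. -/
def IsHistory {A Q : Type*} (ξ : Hist A Q) : Prop :=
  (∀ x y, ξ.le x y → ξ.ans x ≠ none ∧ ξ.ans y ≠ none) ∧
  (∀ x, ξ.ans x ≠ none → ξ.le x x) ∧
  (∀ x y z, ξ.le x y → ξ.le y z → ξ.le x z) ∧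
  (∀ x y, ξ.ans x ≠ none → ξ.ans y ≠ none → ξ.le x y ∨ ξ.le y x)

/-- η ⊴ ξ : η is the restriction of ξ to a downward-closed subset of dom ξ̇. -/
def InitSeg {A Q : Type*} (η ξ : Hist A Q) : Prop :=
  (∀ x, η.ans x ≠ none → η.ans x = ξ.ans x) ∧
  (∀ x y, ξ.le x y → η.ans y ≠ none → η.ans x ≠ none) ∧
  (∀ x y, η.le x y ↔ (ξ.le x y ∧ η.ans x ≠ none ∧ η.ans y ≠ none))

/-- t has a defined value. -/
def HasVal {A Q F E : Type*} (X : F → List A → A) (tmpl : E → List A → Q)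
    (ans : Q → Option A) (t : Term F E) : Prop :=
  ∃ a, Val X tmpl ans t a

/-- Guards: Boolean terms, timing comparisons (s ⪯ t), and the Kleene
connectives ⋏, ⋎, ¬. -/
inductive Guard (F E : Type*) : Type _
  | tm : Term F E → Guard F E
  | timing : Term F E → Term F E → Guard F E
  | kand : Guard F E → Guard F E → Guard F E
  | kor : Guard F E → Guard F E → Guard F E
  | knot : Guard F E → Guard F E

/-- A Boolean term: its value (under any history) is always one of the two
designated truth elements. -/
def IsBooleanTerm {A Q F E : Type*} (X : F → List A → A) (tmpl : E → List A → Q)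
    (tval fval : A) (t : Term F E) : Prop :=
  ∀ (ans : Q → Option A) (a : A), Val X tmpl ans t a → a = tval ∨ a = fval

/-- A guard all of whose atomic term constituents are Boolean terms. -/
inductive GoodGuard {A Q F E : Type*} (X : F → List A → A) (tmpl : E → List A → Q)
    (tval fval : A) : Guard F E → Prop
  | tm {t} : IsBooleanTerm X tmpl tval fval t → GoodGuard X tmpl tval fval (.tm t)
  | timing {s t} : GoodGuard X tmpl tval fval (.timing s t)
  | kand {φ ψ} : GoodGuard X tmpl tval fval φ → GoodGuard X tmpl tval fval ψ →
      GoodGuard X tmpl tval fval (.kand φ ψ)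
  | kor {φ ψ} : GoodGuard X tmpl tval fval φ → GoodGuard X tmpl tval fval ψ →
      GoodGuard X tmpl tval fval (.kor φ ψ)
  | knot {φ} : GoodGuard X tmpl tval fval φ → GoodGuard X tmpl tval fval (.knot φ)

/-- Truth-value semantics of guards ⟦φ⟧_X^ξ, in Kleene's strong
three-valued logic; a timing guard (s ⪯ t) is true if s has a value and t
does not, or if both have values and every initial segment giving t a value
also gives s one; dually for falsity. -/
inductive GVal {A Q F E : Type*} (X : F → List A → A) (tmpl : E → List A → Q)
    (tval fval : A) (ξ : Hist A Q) : Guard F E → Bool → Prop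
  | tmT {t} : Val X tmpl ξ.ans t tval → GVal X tmpl tval fval ξ (.tm t) true
  | tmF {t} : Val X tmpl ξ.ans t fval → GVal X tmpl tval fval ξ (.tm t) false
  | timingT₁ {s t} : HasVal X tmpl ξ.ans s → ¬ HasVal X tmpl ξ.ans t →
      GVal X tmpl tval fval ξ (.timing s t) true
  | timingT₂ {s t} : HasVal X tmpl ξ.ans s → HasVal X tmpl ξ.ans t →
      (∀ η, IsHistory η → InitSeg η ξ → HasVal X tmpl η.ans t → HasVal X tmpl η.ans s) →
      GVal X tmpl tval fval ξ (.timing s t) true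
  | timingF₁ {s t} : HasVal X tmpl ξ.ans t → ¬ HasVal X tmpl ξ.ans s →
      GVal X tmpl tval fval ξ (.timing s t) false
  | timingF₂ {s t} : HasVal X tmpl ξ.ans s → HasVal X tmpl ξ.ans t →
      (∃ η, IsHistory η ∧ InitSeg η ξ ∧ HasVal X tmpl η.ans t ∧ ¬ HasVal X tmpl η.ans s) →
      GVal X tmpl tval fval ξ (.timing s t) false
  | kandT {φ ψ} : GVal X tmpl tval fval ξ φ true → GVal X tmpl tval fval ξ ψ true →
      GVal X tmpl tval fval ξ (.kand φ ψ) true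
  | kandF₀ {φ ψ} : GVal X tmpl tval fval ξ φ false → GVal X tmpl tval fval ξ (.kand φ ψ) false
  | kandF₁ {φ ψ} : GVal X tmpl tval fval ξ ψ false → GVal X tmpl tval fval ξ (.kand φ ψ) false
  | korF {φ ψ} : GVal X tmpl tval fval ξ φ false → GVal X tmpl tval fval ξ ψ false →
      GVal X tmpl tval fval ξ (.kor φ ψ) false
  | korT₀ {φ ψ} : GVal X tmpl tval fval ξ φ true → GVal X tmpl tval fval ξ (.kor φ ψ) true
  | korT₁ {φ ψ} : GVal X tmpl tval fval ξ ψ true → GVal X tmpl tval fval ξ (.kor φ ψ) true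
  | knot {φ b} : GVal X tmpl tval fval ξ φ b → GVal X tmpl tval fval ξ (.knot φ) (!b)

/-- Queries caused by a guard, ξ ⊢_X^φ q. -/
inductive GCauses {A Q F E : Type*} (X : F → List A → A) (tmpl : E → List A → Q)
    (tval fval : A) (ξ : Hist A Q) : Guard F E → Q → Prop
  | tm {t q} : Causes X tmpl ξ.ans t q → GCauses X tmpl tval fval ξ (.tm t) q
  | timingL {s t q} : ¬ HasVal X tmpl ξ.ans s → ¬ HasVal X tmpl ξ.ans t →
      Causes X tmpl ξ.ans s q → GCauses X tmpl tval fval ξ (.timing s t) q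
  | timingR {s t q} : ¬ HasVal X tmpl ξ.ans s → ¬ HasVal X tmpl ξ.ans t →
      Causes X tmpl ξ.ans t q → GCauses X tmpl tval fval ξ (.timing s t) q
  | kand₁ {φ ψ q} : GVal X tmpl tval fval ξ φ true → (¬ ∃ b, GVal X tmpl tval fval ξ ψ b) →
      GCauses X tmpl tval fval ξ ψ q → GCauses X tmpl tval fval ξ (.kand φ ψ) q
  | kand₂ {φ ψ q} : GVal X tmpl tval fval ξ ψ true → (¬ ∃ b, GVal X tmpl tval fval ξ φ b) →
      GCauses X tmpl tval fval ξ φ q → GCauses X tmpl tval fval ξ (.kand φ ψ) q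
  | kand₃l {φ ψ q} : (¬ ∃ b, GVal X tmpl tval fval ξ φ b) → (¬ ∃ b, GVal X tmpl tval fval ξ ψ b) →
      GCauses X tmpl tval fval ξ φ q → GCauses X tmpl tval fval ξ (.kand φ ψ) q
  | kand₃r {φ ψ q} : (¬ ∃ b, GVal X tmpl tval fval ξ φ b) → (¬ ∃ b, GVal X tmpl tval fval ξ ψ b) →
      GCauses X tmpl tval fval ξ ψ q → GCauses X tmpl tval fval ξ (.kand φ ψ) q
  | kor₁ {φ ψ q} : GVal X tmpl tval fval ξ φ false → (¬ ∃ b, GVal X tmpl tval fval ξ ψ b) →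
      GCauses X tmpl tval fval ξ ψ q → GCauses X tmpl tval fval ξ (.kor φ ψ) q
  | kor₂ {φ ψ q} : GVal X tmpl tval fval ξ ψ false → (¬ ∃ b, GVal X tmpl tval fval ξ φ b) →
      GCauses X tmpl tval fval ξ φ q → GCauses X tmpl tval fval ξ (.kor φ ψ) q
  | kor₃l {φ ψ q} : (¬ ∃ b, GVal X tmpl tval fval ξ φ b) → (¬ ∃ b, GVal X tmpl tval fval ξ ψ b) →
      GCauses X tmpl tval fval ξ φ q → GCauses X tmpl tval fval ξ (.kor φ ψ) q
  | kor₃r {φ ψ q} : (¬ ∃ b, GVal X tmpl tval fval ξ φ b) → (¬ ∃ b, GVal X tmpl tval fval ξ ψ b) →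
      GCauses X tmpl tval fval ξ ψ q → GCauses X tmpl tval fval ξ (.kor φ ψ) q
  | knot {φ q} : (¬ ∃ b, GVal X tmpl tval fval ξ φ b) →
      GCauses X tmpl tval fval ξ φ q → GCauses X tmpl tval fval ξ (.knot φ) q


theorem val_mono' {A Q F E : Type*} {X : F → List A → A} {tmpl : E → List A → Q}
    {η ξ : Hist A Q} (hseg : InitSeg η ξ) {t : Term F E} {a : A}
    (h : Val X tmpl η.ans t a) : Val X tmpl ξ.ans t a := by
  induction h with
  | func hl hv ih => exact Val.func hl ih
  | ext hl hv hans ih =>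
      exact Val.ext hl ih (by rw [← hseg.1 _ (by simp [hans])]; exact hans)

theorem hasval_mono' {A Q F E : Type*} {X : F → List A → A} {tmpl : E → List A → Q}
    {η ξ : Hist A Q} (hseg : InitSeg η ξ) {t : Term F E}
    (h : HasVal X tmpl η.ans t) : HasVal X tmpl ξ.ans t := by
  obtain ⟨a, ha⟩ := h; exact ⟨a, val_mono' hseg ha⟩

theorem seg_of_sub' {A Q : Type*} {η₁ η₂ ξ : Hist A Q}
    (h1 : InitSeg η₁ ξ) (h2 : InitSeg η₂ ξ)
    (hsub : ∀ x, η₁.ans x ≠ none → η₂.ans x ≠ none) : InitSeg η₁ η₂ := by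
  refine ⟨fun x hx => ?_, fun x y hxy hy => ?_, fun x y => ?_⟩
  · rw [h1.1 x hx, ← h2.1 x (hsub x hx)]
  · exact h1.2.1 x y (((h2.2.2 x y).1 hxy).1) hy
  · rw [(h1.2.2 x y), (h2.2.2 x y)]
    constructor
    · rintro ⟨hle, hx, hy⟩; exact ⟨⟨hle, hsub x hx, hsub y hy⟩, hx, hy⟩
    · rintro ⟨⟨hle, _, _⟩, hx, hy⟩; exact ⟨hle, hx, hy⟩

theorem seg_total' {A Q : Type*} {η₁ η₂ ξ : Hist A Q} (hξ : IsHistory ξ)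
    (h1 : InitSeg η₁ ξ) (h2 : InitSeg η₂ ξ) : InitSeg η₁ η₂ ∨ InitSeg η₂ η₁ := by
  by_cases hsub : ∀ x, η₁.ans x ≠ none → η₂.ans x ≠ none
  · exact Or.inl (seg_of_sub' h1 h2 hsub)
  · push_neg at hsub
    obtain ⟨x, hx1, hx2⟩ := hsub
    refine Or.inr (seg_of_sub' h2 h1 (fun y hy => ?_))
    have hxd : ξ.ans x ≠ none := by rw [← h1.1 x hx1]; exact hx1
    have hyd : ξ.ans y ≠ none := by rw [← h2.1 y hy]; exact hy
    rcases hξ.2.2.2 x y hxd hyd with h | h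
    · exact absurd (h2.2.1 x y h hy) (by simpa using hx2)
    · exact h1.2.1 y x h hx1

theorem seg_trans' {A Q : Type*} {η₁ η₂ ξ : Hist A Q}
    (h1 : InitSeg η₁ η₂) (h2 : InitSeg η₂ ξ) : InitSeg η₁ ξ := by
  have hsub : ∀ x, η₁.ans x ≠ none → η₂.ans x ≠ none := by
    intro x hx; rw [← h1.1 x hx]; exact hx
  refine ⟨fun x hx => ?_, fun x y hxy hy => ?_, fun x y => ?_⟩
  · rw [h1.1 x hx, h2.1 x (hsub x hx)]
  · have h2le : η₂.le x y := (h2.2.2 x y).2 ⟨hxy, h2.2.1 x y hxy (hsub y hy), hsub y hy⟩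
    exact h1.2.1 x y h2le hy
  · rw [h1.2.2 x y, h2.2.2 x y]
    constructor
    · rintro ⟨⟨hle, _, _⟩, hx, hy⟩; exact ⟨hle, hx, hy⟩
    · rintro ⟨hle, hx, hy⟩
      exact ⟨⟨hle, hsub x hx, hsub y hy⟩, hx, hy⟩

/-- monotonicity of guard values: if η ⊴ ξ and ⟦φ⟧_X^η is
defined, then ⟦φ⟧_X^ξ is defined and equal to it. -/
theorem stmt8 {A Q F E : Type*} (X : F → List A → A) (tmpl : E → List A → Q)
    (tval fval : A) (htf : tval ≠ fval)
    (η ξ : Hist A Q) (hη : IsHistory η) (hξ : IsHistory ξ) (hseg : InitSeg η ξ)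
    (φ : Guard F E) (hφ : GoodGuard X tmpl tval fval φ) (b : Bool) :
    GVal X tmpl tval fval η φ b → GVal X tmpl tval fval ξ φ b := by
  intro h
  clear hφ htf
  induction h with
  | tmT ht => exact .tmT (val_mono' hseg ht)
  | tmF ht => exact .tmF (val_mono' hseg ht)
  | @timingT₁ s t hs ht =>
      by_cases ht' : HasVal X tmpl ξ.ans t
      · refine .timingT₂ (hasval_mono' hseg hs) ht' (fun η' hη' hseg' hv => ?_)
        rcases seg_total' hξ hseg' hseg with h | h
        · exact absurd (hasval_mono' h hv) ht
        · exact hasval_mono' h hs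
      · exact .timingT₁ (hasval_mono' hseg hs) ht'
  | @timingT₂ s t hs ht hall =>
      refine .timingT₂ (hasval_mono' hseg hs) (hasval_mono' hseg ht)
        (fun η' hη' hseg' hv => ?_)
      rcases seg_total' hξ hseg' hseg with h | h
      · exact hall η' hη' h hv
      · exact hasval_mono' h hs
  | @timingF₁ s t ht hs =>
      by_cases hs' : HasVal X tmpl ξ.ans s
      · exact .timingF₂ hs' (hasval_mono' hseg ht) ⟨η, hη, hseg, ht, hs⟩
      · exact .timingF₁ (hasval_mono' hseg ht) hs'
  | @timingF₂ s t hs ht hex =>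
      obtain ⟨η'', h1, h2, h3, h4⟩ := hex
      exact .timingF₂ (hasval_mono' hseg hs) (hasval_mono' hseg ht)
        ⟨η'', h1, seg_trans' h2 hseg, h3, h4⟩
  | kandT _ _ ih1 ih2 => exact .kandT ih1 ih2
  | kandF₀ _ ih => exact .kandF₀ ih
  | kandF₁ _ ih => exact .kandF₁ ih
  | korF _ _ ih1 ih2 => exact .korF ih1 ih2
  | korT₀ _ ih => exact .korT₀ ih
  | korT₁ _ ih => exact .korT₁ ih
  | knot _ ih => exact .knot ih
end

section
/- Bounded queries: for every ASM-term t there is a natural number B(t), depending only on t, such that for every state X and history ξ, the number of distinct queries caused by initial segments of ξ for t is at most B(t); one may take B(f(t₁,…,tₙ)) = 1 + ∑ᵢ B(tᵢ). -/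
namespace Stmt13Aux

def myB {F E : Type*} : Term F E → ℕ
  | .func _ ts => 1 + (ts.attach.map (fun x => myB x.1)).sum
  | .ext _ ts => 1 + (ts.attach.map (fun x => myB x.1)).sum
decreasing_by all_goals { have := List.sizeOf_lt_of_mem x.2; simp; omega }

theorem myB_func {F E : Type*} (f : F) (ts : List (Term F E)) :
    myB (.func f ts) = 1 + (ts.map myB).sum := by
  rw [myB]
  congr 1
  exact congrArg List.sum (List.attach_map_val (l := ts) (f := myB))

theorem myB_ext {F E : Type*} (e : E) (ts : List (Term F E)) :
    myB (.ext e ts) = 1 + (ts.map myB).sum := by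
  rw [myB]
  congr 1
  exact congrArg List.sum (List.attach_map_val (l := ts) (f := myB))

theorem Term.myInd {F E : Type*} {motive : Term F E → Prop}
    (hf : ∀ f ts, (∀ t ∈ ts, motive t) → motive (.func f ts))
    (he : ∀ e ts, (∀ t ∈ ts, motive t) → motive (.ext e ts)) : ∀ t, motive t
  | .func f ts => hf f ts (fun t _ => Term.myInd hf he t)
  | .ext e ts => he e ts (fun t _ => Term.myInd hf he t)


variable {A Q F E : Type*} {X : F → List A → A} {tmpl : E → List A → Q}

theorem Val.mono {ans ans' : Q → Option A}
    (h : ∀ x a, ans x = some a → ans' x = some a) :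
    ∀ {t : Term F E} {a : A}, Val X tmpl ans t a → Val X tmpl ans' t a := by
  intro t a hv
  induction hv with
  | func hlen hvals ih => exact Val.func hlen (fun p hp => ih p hp)
  | ext hlen hvals ha ih => exact Val.ext hlen (fun p hp => ih p hp) (h _ _ ha)

theorem lists_eq {ans : Q → Option A} :
    ∀ (ts : List (Term F E)) (as as' : List A),
    ts.length = as.length → ts.length = as'.length →
    (∀ p ∈ ts.zip as, ∀ a', Val X tmpl ans p.1 a' → p.2 = a') →
    (∀ p ∈ ts.zip as', Val X tmpl ans p.1 p.2) → as = as'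
  | [], [], [], _, _, _, _ => rfl
  | t :: ts, a :: as, a' :: as', h1, h2, det, hv' => by
    have e1 : a = a' := det (t, a) (by simp) a' (hv' (t, a') (by simp))
    have e2 : as = as' :=
      lists_eq ts as as' (by simpa using h1) (by simpa using h2)
        (fun p hp => det p (by simp [hp])) (fun p hp => hv' p (by simp [hp]))
    rw [e1, e2]

theorem Val.det {ans : Q → Option A} :
    ∀ {t : Term F E} {a : A}, Val X tmpl ans t a → ∀ {a'}, Val X tmpl ans t a' → a = a' := by
  intro t a hv
  induction hv with
  | @func f ts as hlen hvals ih =>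
    intro a' hv'
    cases hv' with
    | @func _ _ as' hlen' hvals' =>
      rw [lists_eq ts as as' hlen hlen' (fun p hp a' h => ih p hp h) hvals']
  | @ext e ts as a hlen hvals ha ih =>
    intro a' hv'
    cases hv' with
    | @ext _ _ as' a' hlen' hvals' ha' =>
      rw [lists_eq ts as as' hlen hlen' (fun p hp a' h => ih p hp h) hvals'] at ha
      rw [ha] at ha'
      exact Option.some_injective _ ha'


theorem union_bound (S : Term F E → Set Q) (B : Term F E → ℕ) :
    ∀ ts : List (Term F E), (∀ t ∈ ts, (S t).Finite ∧ (S t).ncard ≤ B t) →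
      (⋃ t ∈ ts, S t).Finite ∧ (⋃ t ∈ ts, S t).ncard ≤ (ts.map B).sum := by
  intro ts h
  induction ts with
  | nil => simp
  | cons a ts ih =>
    have heq : (⋃ t ∈ a :: ts, S t) = S a ∪ ⋃ t ∈ ts, S t := by
      simp [List.mem_cons, Set.iUnion_or, Set.iUnion_union_distrib]
    have ha := h a (by simp)
    have hts := ih (fun t ht => h t (by simp [ht]))
    rw [heq]
    refine ⟨ha.1.union hts.1, ?_⟩
    calc (S a ∪ ⋃ t ∈ ts, S t).ncard ≤ (S a).ncard + (⋃ t ∈ ts, S t).ncard :=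
          Set.ncard_union_le _ _
      _ ≤ B a + (ts.map B).sum := Nat.add_le_add ha.2 hts.2
      _ = ((a :: ts).map B).sum := by simp

end Stmt13Aux

/-- for every ASM-term t there is a bound B(t), depending only
on t, on the number of distinct queries caused for t by initial segments of
any history ξ in any state X; one may take B(f(t₁,…,tₙ)) = 1 + ∑ᵢ B(tᵢ). -/
theorem stmt13 {A Q F E : Type*} :
    ∃ B : Term F E → ℕ,
      (∀ (f : F) (ts : List (Term F E)), B (.func f ts) = 1 + (ts.map B).sum) ∧
      (∀ (e : E) (ts : List (Term F E)), B (.ext e ts) = 1 + (ts.map B).sum) ∧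
      (∀ (X : F → List A → A) (tmpl : E → List A → Q) (ξ : Hist A Q),
        IsHistory ξ → ∀ t : Term F E,
          {q | ∃ η, IsHistory η ∧ InitSeg η ξ ∧ Causes X tmpl η.ans t q}.Finite ∧
          {q | ∃ η, IsHistory η ∧ InitSeg η ξ ∧ Causes X tmpl η.ans t q}.ncard ≤ B t) := by
  classical
  refine ⟨Stmt13Aux.myB, Stmt13Aux.myB_func, Stmt13Aux.myB_ext, ?_⟩
  open Stmt13Aux in
  intro X tmpl ξ hξ
  set S : Term F E → Set Q :=
    fun t => {q | ∃ η, IsHistory η ∧ InitSeg η ξ ∧ Causes X tmpl η.ans t q} with hS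
  show ∀ t, (S t).Finite ∧ (S t).ncard ≤ myB t
  refine Term.myInd ?_ ?_
  · -- internal function symbol
    intro f ts ih
    have heq : S (.func f ts) = ⋃ t ∈ ts, S t := by
      ext q
      simp only [hS, Set.mem_setOf_eq, Set.mem_iUnion]
      constructor
      · rintro ⟨η, h1, h2, h3⟩
        cases h3 with
        | funcArg ht hc => exact ⟨_, ht, η, h1, h2, hc⟩
      · rintro ⟨t', ht', η, h1, h2, h3⟩
        exact ⟨η, h1, h2, Causes.funcArg ht' h3⟩
    have hu := union_bound S myB ts ih
    rw [heq, myB_func]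
    exact ⟨hu.1, hu.2.trans (by omega)⟩
  · -- external function symbol
    intro e ts ih
    set Sq : Set Q := {q | ∃ as : List A, ts.length = as.length ∧
      (∀ p ∈ ts.zip as, Val X tmpl ξ.ans p.1 p.2) ∧ q = tmpl e as} with hSq
    have hsub : S (.ext e ts) ⊆ (⋃ t ∈ ts, S t) ∪ Sq := by
      rintro q ⟨η, h1, h2, h3⟩
      cases h3 with
      | extArg ht hc =>
        exact Or.inl (Set.mem_biUnion ht ⟨η, h1, h2, hc⟩)
      | @extQ _ _ as hlen hvals hnone =>
        refine Or.inr ⟨as, hlen, fun p hp => ?_, rfl⟩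
        refine Val.mono (fun x a hx => ?_) (hvals p hp)
        have h := h2.1 x (by simp [hx])
        rw [hx] at h; exact h.symm
    have hss : Sq.Subsingleton := by
      rintro q ⟨as, hlen, hvals, rfl⟩ q' ⟨as', hlen', hvals', rfl⟩
      have : as = as' :=
        lists_eq ts as as' hlen hlen'
          (fun p hp a' h => Val.det (hvals p hp) h) hvals'
      rw [this]
    have hu := union_bound S myB ts ih
    have hfin : ((⋃ t ∈ ts, S t) ∪ Sq).Finite := hu.1.union hss.finite
    have hqcard : Sq.ncard ≤ 1 := by
      rcases hss.eq_empty_or_singleton with h | ⟨a, h⟩ <;> simp [h]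
    refine ⟨hfin.subset hsub, ?_⟩
    rw [myB_ext]
    calc (S (.ext e ts)).ncard ≤ ((⋃ t ∈ ts, S t) ∪ Sq).ncard :=
          Set.ncard_le_ncard hsub hfin
      _ ≤ (⋃ t ∈ ts, S t).ncard + Sq.ncard := Set.ncard_union_le _ _
      _ ≤ (ts.map myB).sum + 1 := Nat.add_le_add hu.2 hqcard
      _ = 1 + (ts.map myB).sum := by omega
end
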